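/- Let N ≥ 2, d ≥ 2 be integers, let ψ : (Fin N → Fin d) → ℂ be a unit vector that is genuinely multipartite entangled (GME), and let 𝓕 be a family of subsets of Fin N. If ψ is 𝓕-UDP, then the hypergraph G_𝓕 with vertex set Fin N and edge set 𝓕 is connected: for every pair of distinct vertices u, v ∈ Fin N there exist edges e_1, …, e_s ∈ 𝓕 and pairwise distinct vertices v_1, …, v_{s+1} ∈ Fin N with v_1 = u, v_{s+1} = v, and {v_t, v_{t+1}} ⊆ e_t for every t ∈ {1, …, s}. -/

import Mathlib

open Finset

/-- Combine `x` defined on `S` with `z` defined on the complement of `S`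
into a full assignment `Fin N → Fin d`. -/
def joinFun {N d : ℕ} (S : Finset (Fin N))
    (x : {i // i ∈ S} → Fin d) (z : {i // i ∉ S} → Fin d) : Fin N → Fin d :=
  fun i => if h : i ∈ S then x ⟨i, h⟩ else z ⟨i, h⟩

/-- The marginal (reduced density matrix) of the pure state `ψ` on the parties `S`. -/
noncomputable def marginal {N d : ℕ} (S : Finset (Fin N)) (ψ : (Fin N → Fin d) → ℂ)
    (x y : {i // i ∈ S} → Fin d) : ℂ :=
  ∑ z : {i // i ∉ S} → Fin d,
    ψ (joinFun S x z) * (starRingEnd ℂ) (ψ (joinFun S y z))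

/-- `ψ` is a unit vector. -/
def UnitVec {N d : ℕ} (ψ : (Fin N → Fin d) → ℂ) : Prop :=
  ∑ x, ‖ψ x‖ ^ 2 = 1

/-- `ψ` is genuinely multipartite entangled. -/
def GME {N d : ℕ} (ψ : (Fin N → Fin d) → ℂ) : Prop :=
  ∀ J : Finset (Fin N), J.Nonempty → J ≠ Finset.univ →
    ¬ ∃ (α : ({i // i ∈ J} → Fin d) → ℂ) (β : ({i // i ∉ J} → Fin d) → ℂ),
      ∀ x z, ψ (joinFun J x z) = α x * β z

/-- `ψ` is uniquely determined by the family of marginals `𝓕` among pure states. -/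
def UDP {N d : ℕ} (𝓕 : Finset (Finset (Fin N))) (ψ : (Fin N → Fin d) → ℂ) : Prop :=
  ∀ φ : (Fin N → Fin d) → ℂ, UnitVec φ →
    (∀ F ∈ 𝓕, marginal F φ = marginal F ψ) →
    ∃ c : ℂ, ‖c‖ = 1 ∧ φ = c • ψ

/-- There is a path between `u` and `v` in the hypergraph with vertex set `Fin N`
and edge set `𝓕`: a sequence of edges `e 0, …, e (s-1)` and pairwise distinct
vertices `vs 0 = u, …, vs s = v` with consecutive vertices contained in the
corresponding edge. -/
def HasPath {N : ℕ} (𝓕 : Finset (Finset (Fin N))) (u v : Fin N) : Prop :=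
  ∃ (s : ℕ) (e : Fin s → Finset (Fin N)) (vs : Fin (s + 1) → Fin N),
    (∀ t, e t ∈ 𝓕) ∧ Function.Injective vs ∧
    vs 0 = u ∧ vs (Fin.last s) = v ∧
    ∀ t : Fin s, vs t.castSucc ∈ e t ∧ vs t.succ ∈ e t

set_option linter.unusedVariables false

namespace AuxUDP

variable {N d : ℕ}

def splitIn (S : Finset (Fin N)) (f : Fin N → Fin d) : {i // i ∈ S} → Fin d :=
  fun i => f i

def splitOut (S : Finset (Fin N)) (f : Fin N → Fin d) : {i // i ∉ S} → Fin d :=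
  fun i => f i

@[simp] lemma splitIn_join (S : Finset (Fin N)) (x : {i // i ∈ S} → Fin d)
    (z : {i // i ∉ S} → Fin d) : splitIn S (joinFun S x z) = x := by
  funext i; simp [splitIn, joinFun, i.2]

@[simp] lemma splitOut_join (S : Finset (Fin N)) (x : {i // i ∈ S} → Fin d)
    (z : {i // i ∉ S} → Fin d) : splitOut S (joinFun S x z) = z := by
  funext i; simp [splitOut, joinFun, i.2]

@[simp] lemma join_split (S : Finset (Fin N)) (f : Fin N → Fin d) :
    joinFun S (splitIn S f) (splitOut S f) = f := by
  funext i; by_cases h : i ∈ S <;> simp [joinFun, splitIn, splitOut, h]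

def joinEquiv (S : Finset (Fin N)) :
    (({i // i ∈ S} → Fin d) × ({i // i ∉ S} → Fin d)) ≃ (Fin N → Fin d) where
  toFun p := joinFun S p.1 p.2
  invFun f := (splitIn S f, splitOut S f)
  left_inv p := by simp
  right_inv f := by simp

lemma sum_join (S : Finset (Fin N)) (g : (Fin N → Fin d) → ℂ) :
    ∑ f, g f = ∑ x : {i // i ∈ S} → Fin d, ∑ z : {i // i ∉ S} → Fin d,
      g (joinFun S x z) := by
  calc ∑ f, g f
      = ∑ p : ({i // i ∈ S} → Fin d) × ({i // i ∉ S} → Fin d), g (joinFun S p.1 p.2) :=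
        (Fintype.sum_equiv (joinEquiv S) _ _ fun p => rfl).symm
    _ = _ := Fintype.sum_prod_type _

lemma unitVec_iff (χ : (Fin N → Fin d) → ℂ) :
    UnitVec χ ↔ ∑ f, χ f * (starRingEnd ℂ) (χ f) = 1 := by
  have h : ∀ t : ℂ, t * (starRingEnd ℂ) t = ((‖t‖ ^ 2 : ℝ) : ℂ) := by
    intro t
    rw [Complex.mul_conj, Complex.sq_norm]
  unfold UnitVec
  rw [show (∑ f, χ f * (starRingEnd ℂ) (χ f)) = ((∑ f, ‖χ f‖ ^ 2 : ℝ) : ℂ) by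
    rw [Complex.ofReal_sum]; exact Finset.sum_congr rfl fun f _ => h (χ f)]
  exact_mod_cast Iff.symm Complex.ofReal_eq_one

variable {N d : ℕ}

def extFun (F S : Finset (Fin N)) (x : {i // i ∈ F} → Fin d)
    (w : {i : {j // j ∉ F} // (i : Fin N) ∈ S} → Fin d) : {i // i ∈ S} → Fin d :=
  fun i => if h : (i : Fin N) ∈ F then x ⟨i, h⟩ else w ⟨⟨i, h⟩, i.2⟩

def glueFun (F S : Finset (Fin N))
    (w : {i : {j // j ∉ F} // (i : Fin N) ∈ S} → Fin d)
    (w₂ : {i // i ∉ S} → Fin d) : {i // i ∉ F} → Fin d :=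
  fun t => if h : (t : Fin N) ∈ S then w ⟨t, h⟩ else w₂ ⟨t, h⟩

lemma join_glue {F S : Finset (Fin N)} (hFS : F ⊆ S) (x : {i // i ∈ F} → Fin d)
    (w : {i : {j // j ∉ F} // (i : Fin N) ∈ S} → Fin d) (w₂ : {i // i ∉ S} → Fin d) :
    joinFun F x (glueFun F S w w₂) = joinFun S (extFun F S x w) w₂ := by
  funext i
  by_cases h1 : i ∈ F
  · have h2 : i ∈ S := hFS h1
    simp [joinFun, h1, h2, extFun]
  · by_cases h2 : i ∈ S <;> simp [joinFun, glueFun, extFun, h1, h2]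

def glueEquiv {F S : Finset (Fin N)} (hFS : F ⊆ S) :
    (({i : {j // j ∉ F} // (i : Fin N) ∈ S} → Fin d) × ({i // i ∉ S} → Fin d))
      ≃ ({i // i ∉ F} → Fin d) where
  toFun p := glueFun F S p.1 p.2
  invFun z := (fun i => z i.1, fun i => z ⟨i.1, fun hF => i.2 (hFS hF)⟩)
  left_inv p := by
    ext i
    · simp [glueFun, i.2]
    · simp [glueFun, i.2]
  right_inv z := by
    funext t
    by_cases h : (t : Fin N) ∈ S <;> simp [glueFun, h]

lemma marginal_eq_sum {F S : Finset (Fin N)} (hFS : F ⊆ S) (χ : (Fin N → Fin d) → ℂ)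
    (x y : {i // i ∈ F} → Fin d) :
    marginal F χ x y = ∑ w, marginal S χ (extFun F S x w) (extFun F S y w) := by
  unfold marginal
  calc ∑ z : {i // i ∉ F} → Fin d,
        χ (joinFun F x z) * (starRingEnd ℂ) (χ (joinFun F y z))
      = ∑ p : ({i : {j // j ∉ F} // (i : Fin N) ∈ S} → Fin d) × ({i // i ∉ S} → Fin d),
          χ (joinFun F x (glueEquiv hFS p)) * (starRingEnd ℂ) (χ (joinFun F y (glueEquiv hFS p))) :=
        (Fintype.sum_equiv (glueEquiv hFS) _ _ fun p => rfl).symm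
    _ = ∑ w, ∑ w₂,
          χ (joinFun S (extFun F S x w) w₂) * (starRingEnd ℂ) (χ (joinFun S (extFun F S y w) w₂)) := by
        rw [Fintype.sum_prod_type]
        exact Finset.sum_congr rfl fun w _ => Finset.sum_congr rfl fun w₂ _ => by
          rw [show (glueEquiv hFS (w, w₂) : {i // i ∉ F} → Fin d) = glueFun F S w w₂ from rfl,
            join_glue hFS, join_glue hFS]

lemma marginal_mono {F S : Finset (Fin N)} (hFS : F ⊆ S) {φ ψ : (Fin N → Fin d) → ℂ}
    (h : marginal S φ = marginal S ψ) : marginal F φ = marginal F ψ := by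
  funext x y
  rw [marginal_eq_sum hFS, marginal_eq_sum hFS, h]



end AuxUDP

namespace AuxUDP2
open AuxUDP
variable {N d : ℕ}

def complInEquiv (J : Finset (Fin N)) : {i : Fin N // i ∉ Jᶜ} ≃ {i : Fin N // i ∈ J} :=
  Equiv.subtypeEquivRight fun i => by simp

def complOutEquiv (J : Finset (Fin N)) : {i : Fin N // i ∈ Jᶜ} ≃ {i : Fin N // i ∉ J} :=
  Equiv.subtypeEquivRight fun i => by simp

lemma join_compl (J : Finset (Fin N)) (x : {i // i ∈ Jᶜ} → Fin d) (z : {i // i ∉ Jᶜ} → Fin d) :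
    joinFun Jᶜ x z
      = joinFun J (fun i => z ((complInEquiv J).symm i))
          (fun i => x ((complOutEquiv J).symm i)) := by
  funext i
  by_cases h : i ∈ J
  · have h' : i ∉ Jᶜ := by simp [h]
    simp [joinFun, h, h', complInEquiv, Equiv.subtypeEquivRight]; rfl
  · have h' : i ∈ Jᶜ := by simp [h]
    simp [joinFun, h, h', complOutEquiv, Equiv.subtypeEquivRight]; rfl

lemma marginal_compl (J : Finset (Fin N)) (χ : (Fin N → Fin d) → ℂ)
    (x y : {i // i ∈ Jᶜ} → Fin d) :
    marginal Jᶜ χ x y = ∑ x' : {i // i ∈ J} → Fin d,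
      χ (joinFun J x' (fun i => x ((complOutEquiv J).symm i))) *
        (starRingEnd ℂ) (χ (joinFun J x' (fun i => y ((complOutEquiv J).symm i)))) := by
  unfold marginal
  refine Fintype.sum_equiv (Equiv.arrowCongr (complInEquiv J) (Equiv.refl (Fin d))) _ _
    fun z => ?_
  rw [join_compl J x z, join_compl J y z]
  rfl

end AuxUDP2

namespace AuxUDP3
open AuxUDP AuxUDP2

lemma exists_bad_phi {N d : ℕ} (ψ : (Fin N → Fin d) → ℂ) (hψ : UnitVec ψ)
    (hGME : GME ψ) (J : Finset (Fin N)) (hJne : J.Nonempty) (hJpr : J ≠ Finset.univ) :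
    ∃ φ : (Fin N → Fin d) → ℂ, UnitVec φ ∧
      marginal J φ = marginal J ψ ∧ marginal Jᶜ φ = marginal Jᶜ ψ ∧
      ∀ c : ℂ, φ ≠ c • ψ := by
  classical
  let a : ({i // i ∈ J} → Fin d) → ({i // i ∉ J} → Fin d) → ℂ :=
    fun x z => ψ (joinFun J x z)
  let P : Matrix ({i // i ∈ J} → Fin d) ({i // i ∈ J} → Fin d) ℂ :=
    Matrix.of fun x y => ∑ z, a x z * (starRingEnd ℂ) (a y z)
  have hPdef : ∀ x y, P x y = ∑ z, a x z * (starRingEnd ℂ) (a y z) := fun _ _ => rfl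
  have hP : P.IsHermitian := by
    ext x y
    simp only [Matrix.conjTranspose_apply, Matrix.of_apply, P, Complex.star_def, map_sum,
      map_mul, Complex.conj_conj]
    exact Finset.sum_congr rfl fun z _ => by ring
  have htr : ∑ x, P x x = 1 := by
    have h1 := (unitVec_iff ψ).mp hψ
    rw [sum_join J] at h1
    exact h1
  obtain ⟨i, hlam⟩ : ∃ i, hP.eigenvalues i ≠ 0 := by
    by_contra hc
    push_neg at hc
    have hdiag : Matrix.diagonal (RCLike.ofReal ∘ hP.eigenvalues)
        = (0 : Matrix ({i // i ∈ J} → Fin d) ({i // i ∈ J} → Fin d) ℂ) := by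
      rw [show RCLike.ofReal ∘ hP.eigenvalues = fun _ => (0 : ℂ) from
        funext fun j => by simp [hc j]]
      exact Matrix.diagonal_zero
    have hP0 : P = 0 := by
      rw [hP.spectral_theorem, hdiag]
      simp
    rw [hP0] at htr
    simp at htr
  set lam := hP.eigenvalues i with hlamdef
  set v : ({i // i ∈ J} → Fin d) → ℂ := ⇑(hP.eigenvectorBasis i) with hvdef
  have hv1 : ∑ x, (starRingEnd ℂ) (v x) * v x = 1 := by
    have h1 : (inner ℂ (hP.eigenvectorBasis i) (hP.eigenvectorBasis i) : ℂ) = 1 := by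
      rw [inner_self_eq_norm_sq_to_K, hP.eigenvectorBasis.orthonormal.1 i]
      norm_num
    rw [PiLp.inner_apply] at h1
    simpa only [RCLike.inner_apply, mul_comm] using h1
  have heig : ∀ x, ∑ y, P x y * v y = (lam : ℂ) * v x := by
    intro x
    have h2 := congrFun (hP.mulVec_eigenvectorBasis i) x
    have h2' : ∑ y, P x y * v y = lam • v x := h2
    rw [h2', Complex.real_smul]
  let cz : ({i // i ∉ J} → Fin d) → ℂ := fun z => ∑ x, (starRingEnd ℂ) (v x) * a x z
  have hczdef : ∀ z, cz z = ∑ x, (starRingEnd ℂ) (v x) * a x z := fun _ => rfl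
  let φ : (Fin N → Fin d) → ℂ := fun f => ψ f - 2 * v (splitIn J f) * cz (splitOut J f)
  have hφj : ∀ x z, φ (joinFun J x z) = a x z - 2 * v x * cz z := by
    intro x z
    show ψ (joinFun J x z) - 2 * v (splitIn J (joinFun J x z)) * cz (splitOut J (joinFun J x z)) = _
    rw [splitIn_join, splitOut_join]
  have hL1 : ∀ x, ∑ z, a x z * (starRingEnd ℂ) (cz z) = (lam : ℂ) * v x := by
    intro x
    calc ∑ z, a x z * (starRingEnd ℂ) (cz z)
        = ∑ z, ∑ y, (a x z * (starRingEnd ℂ) (a y z)) * v y := by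
          refine Finset.sum_congr rfl fun z _ => ?_
          rw [hczdef, map_sum, Finset.mul_sum]
          exact Finset.sum_congr rfl fun y _ => by
            simp only [map_mul, Complex.conj_conj]; ring
      _ = ∑ y, (∑ z, a x z * (starRingEnd ℂ) (a y z)) * v y := by
          rw [Finset.sum_comm]
          exact Finset.sum_congr rfl fun y _ => (Finset.sum_mul _ _ _).symm
      _ = ∑ y, P x y * v y := by
          exact Finset.sum_congr rfl fun y _ => by rw [hPdef]
      _ = (lam : ℂ) * v x := heig x
  have hL2 : ∀ y, ∑ z, cz z * (starRingEnd ℂ) (a y z) = (lam : ℂ) * (starRingEnd ℂ) (v y) := by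
    intro y
    have h := congrArg (starRingEnd ℂ) (hL1 y)
    simp only [map_sum, map_mul, Complex.conj_conj, Complex.conj_ofReal] at h
    rw [← h]
    exact Finset.sum_congr rfl fun z _ => by ring
  have hL3 : ∑ z, cz z * (starRingEnd ℂ) (cz z) = (lam : ℂ) := by
    calc ∑ z, cz z * (starRingEnd ℂ) (cz z)
        = ∑ z, ∑ x, (starRingEnd ℂ) (v x) * (a x z * (starRingEnd ℂ) (cz z)) := by
          refine Finset.sum_congr rfl fun z _ => ?_
          rw [hczdef, Finset.sum_mul]
          exact Finset.sum_congr rfl fun x _ => by ring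
      _ = ∑ x, (starRingEnd ℂ) (v x) * ∑ z, a x z * (starRingEnd ℂ) (cz z) := by
          rw [Finset.sum_comm]
          exact Finset.sum_congr rfl fun x _ => (Finset.mul_sum _ _ _).symm
      _ = ∑ x, (starRingEnd ℂ) (v x) * ((lam : ℂ) * v x) := by
          exact Finset.sum_congr rfl fun x _ => by rw [hL1 x]
      _ = (lam : ℂ) * ∑ x, (starRingEnd ℂ) (v x) * v x := by
          rw [Finset.mul_sum]
          exact Finset.sum_congr rfl fun x _ => by ring
      _ = (lam : ℂ) := by rw [hv1, mul_one]
  have hcol : ∀ z₁ z₂, ∑ x, φ (joinFun J x z₁) * (starRingEnd ℂ) (φ (joinFun J x z₂))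
      = ∑ x, a x z₁ * (starRingEnd ℂ) (a x z₂) := by
    intro z₁ z₂
    have hcz2 : ∑ x, v x * (starRingEnd ℂ) (a x z₂) = (starRingEnd ℂ) (cz z₂) := by
      rw [hczdef, map_sum]
      exact Finset.sum_congr rfl fun x _ => by
        simp only [map_mul, Complex.conj_conj]
    have expand : ∀ x, φ (joinFun J x z₁) * (starRingEnd ℂ) (φ (joinFun J x z₂))
        = a x z₁ * (starRingEnd ℂ) (a x z₂)
          - 2 * (starRingEnd ℂ) (cz z₂) * ((starRingEnd ℂ) (v x) * a x z₁)
          - 2 * cz z₁ * (v x * (starRingEnd ℂ) (a x z₂))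
          + 4 * (cz z₁ * (starRingEnd ℂ) (cz z₂)) * ((starRingEnd ℂ) (v x) * v x) := by
      intro x
      rw [hφj, hφj]
      simp only [map_sub, map_mul, map_ofNat]
      ring
    rw [Finset.sum_congr rfl fun x _ => expand x]
    rw [Finset.sum_add_distrib, Finset.sum_sub_distrib, Finset.sum_sub_distrib,
      ← Finset.mul_sum, ← Finset.mul_sum, ← Finset.mul_sum]
    rw [show ∑ x, (starRingEnd ℂ) (v x) * a x z₁ = cz z₁ from (hczdef z₁).symm, hcz2, hv1]
    ring
  have hmargJ : marginal J φ = marginal J ψ := by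
    funext x y
    unfold marginal
    have expand : ∀ z, φ (joinFun J x z) * (starRingEnd ℂ) (φ (joinFun J y z))
        = a x z * (starRingEnd ℂ) (a y z)
          - 2 * (starRingEnd ℂ) (v y) * (a x z * (starRingEnd ℂ) (cz z))
          - 2 * v x * (cz z * (starRingEnd ℂ) (a y z))
          + 4 * (v x * (starRingEnd ℂ) (v y)) * (cz z * (starRingEnd ℂ) (cz z)) := by
      intro z
      rw [hφj, hφj]
      simp only [map_sub, map_mul, map_ofNat]
      ring
    rw [Finset.sum_congr rfl fun z _ => expand z]
    rw [Finset.sum_add_distrib, Finset.sum_sub_distrib, Finset.sum_sub_distrib,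
      ← Finset.mul_sum, ← Finset.mul_sum, ← Finset.mul_sum]
    rw [hL1 x, hL2 y, hL3]
    ring
  have hunit : UnitVec φ := by
    rw [unitVec_iff, sum_join J (fun f => φ f * (starRingEnd ℂ) (φ f))]
    calc ∑ x, ∑ z, φ (joinFun J x z) * (starRingEnd ℂ) (φ (joinFun J x z))
        = ∑ z, ∑ x, φ (joinFun J x z) * (starRingEnd ℂ) (φ (joinFun J x z)) :=
          Finset.sum_comm
      _ = ∑ z, ∑ x, a x z * (starRingEnd ℂ) (a x z) :=
          Finset.sum_congr rfl fun z _ => hcol z z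
      _ = ∑ x, ∑ z, ψ (joinFun J x z) * (starRingEnd ℂ) (ψ (joinFun J x z)) :=
          Finset.sum_comm
      _ = 1 := by
          rw [← sum_join J (fun f => ψ f * (starRingEnd ℂ) (ψ f))]
          exact (unitVec_iff ψ).mp hψ
  have hmargJc : marginal Jᶜ φ = marginal Jᶜ ψ := by
    funext x y
    rw [marginal_compl, marginal_compl]
    exact hcol _ _
  refine ⟨φ, hunit, hmargJ, hmargJc, ?_⟩
  intro c hceq
  have hbc : ∀ x z, a x z - 2 * v x * cz z = c * a x z := by
    intro x z
    have h := congrFun hceq (joinFun J x z)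
    rw [hφj] at h
    simpa using h
  by_cases hc1 : c = 1
  · have hvz : ∀ x z, 2 * v x * cz z = 0 := by
      intro x z
      have h := hbc x z
      rw [hc1, one_mul] at h
      exact sub_eq_self.mp h
    obtain ⟨x₀, hx₀⟩ : ∃ x, v x ≠ 0 := by
      by_contra hall
      push_neg at hall
      rw [Finset.sum_eq_zero fun x _ => by rw [hall x, mul_zero]] at hv1
      exact zero_ne_one hv1
    have hcz0 : ∀ z, cz z = 0 := by
      intro z
      have h := hvz x₀ z
      rcases mul_eq_zero.mp h with h' | h'
      · rcases mul_eq_zero.mp h' with h'' | h''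
        · exact absurd h'' two_ne_zero
        · exact absurd h'' hx₀
      · exact h'
    have hzero : (lam : ℂ) = 0 := by
      rw [← hL3]
      exact Finset.sum_eq_zero fun z _ => by rw [hcz0 z, zero_mul]
    exact hlam (by exact_mod_cast hzero)
  · refine hGME J hJne hJpr ⟨fun x => (2 / (1 - c)) * v x, cz, fun x z => ?_⟩
    have h := hbc x z
    have h1c : (1 : ℂ) - c ≠ 0 := sub_ne_zero.mpr (Ne.symm hc1)
    show a x z = 2 / (1 - c) * v x * cz z
    rw [div_mul_eq_mul_div, div_mul_eq_mul_div, eq_div_iff h1c]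
    linear_combination h

end AuxUDP3

namespace AuxUDP4

def hyperG {N : ℕ} (𝓕 : Finset (Finset (Fin N))) : SimpleGraph (Fin N) where
  Adj a b := a ≠ b ∧ ∃ e ∈ 𝓕, a ∈ e ∧ b ∈ e
  symm := ⟨fun a b ⟨h, e, he, ha, hb⟩ => ⟨h.symm, e, he, hb, ha⟩⟩
  loopless := ⟨fun a h => h.1 rfl⟩

lemma getVert_inj {V : Type*} {G : SimpleGraph V} :
    ∀ {u v : V} (p : G.Walk u v), p.IsPath → ∀ i j : ℕ, i ≤ p.length → j ≤ p.length →
      p.getVert i = p.getVert j → i = j := by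
  intro u v p
  induction p with
  | nil =>
    intro _ i j hi hj _
    simp only [SimpleGraph.Walk.length_nil, Nat.le_zero] at hi hj
    omega
  | cons h q ih =>
    intro hp i j hi hj heq
    rw [SimpleGraph.Walk.cons_isPath_iff] at hp
    simp only [SimpleGraph.Walk.length_cons] at hi hj
    match i, j with
    | 0, 0 => rfl
    | 0, (k + 1) =>
      exfalso
      apply hp.2
      rw [SimpleGraph.Walk.mem_support_iff_exists_getVert]
      refine ⟨k, ?_, by omega⟩
      have h1 : (SimpleGraph.Walk.cons h q).getVert 0 = _ := SimpleGraph.Walk.getVert_zero _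
      have h2 : (SimpleGraph.Walk.cons h q).getVert (k + 1) = q.getVert k :=
        SimpleGraph.Walk.getVert_cons_succ _ _
      rw [h1, h2] at heq
      exact heq.symm
    | (k + 1), 0 =>
      exfalso
      apply hp.2
      rw [SimpleGraph.Walk.mem_support_iff_exists_getVert]
      refine ⟨k, ?_, by omega⟩
      have h1 : (SimpleGraph.Walk.cons h q).getVert 0 = _ := SimpleGraph.Walk.getVert_zero _
      have h2 : (SimpleGraph.Walk.cons h q).getVert (k + 1) = q.getVert k :=
        SimpleGraph.Walk.getVert_cons_succ _ _
      rw [h1, h2] at heq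
      exact heq
    | (k + 1), (l + 1) =>
      have := ih hp.1 k l (by omega) (by omega) (by
        rw [← SimpleGraph.Walk.getVert_cons_succ q h (n := k),
          ← SimpleGraph.Walk.getVert_cons_succ q h (n := l)]
        exact heq)
      omega

lemma reachable_hasPath {N : ℕ} (𝓕 : Finset (Finset (Fin N))) {u v : Fin N}
    (h : (hyperG 𝓕).Reachable u v) : HasPath 𝓕 u v := by
  obtain ⟨w⟩ := h
  obtain ⟨p, hp⟩ := w.toPath
  have hadj : ∀ t : Fin p.length, ∃ e ∈ 𝓕,
      p.getVert (t : ℕ) ∈ e ∧ p.getVert ((t : ℕ) + 1) ∈ e :=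
    fun t => (show p.getVert (t : ℕ) ≠ p.getVert ((t : ℕ) + 1) ∧ ∃ e ∈ 𝓕,
        p.getVert (t : ℕ) ∈ e ∧ p.getVert ((t : ℕ) + 1) ∈ e from p.adj_getVert_succ t.isLt).2
  choose e he h1 h2 using hadj
  refine ⟨p.length, e, fun t => p.getVert (t : ℕ), he, ?_, ?_, ?_, ?_⟩
  · intro t1 t2 ht
    have := getVert_inj p hp (t1 : ℕ) (t2 : ℕ)
      (Nat.lt_succ_iff.mp t1.isLt) (Nat.lt_succ_iff.mp t2.isLt) ht
    exact Fin.ext this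
  · simpa using p.getVert_zero
  · simpa using p.getVert_length
  · intro t
    refine ⟨?_, ?_⟩
    · simpa using h1 t
    · simpa using h2 t

end AuxUDP4

open AuxUDP AuxUDP2 AuxUDP3 AuxUDP4 in
/-- If a GME pure state `ψ` is `𝓕`-UDP, then the hypergraph
`G_𝓕` is connected. -/
theorem gme_UDP_implies_connected (N d : ℕ) (hN : 2 ≤ N) (hd : 2 ≤ d)
    (ψ : (Fin N → Fin d) → ℂ) (hψ : UnitVec ψ) (hGME : GME ψ)
    (𝓕 : Finset (Finset (Fin N))) (hUDP : UDP 𝓕 ψ) :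
    ∀ u v : Fin N, u ≠ v → HasPath 𝓕 u v := by
  intro u v huv
  by_contra hnp
  classical
  have hnr : ¬ (hyperG 𝓕).Reachable u v := fun h => hnp (reachable_hasPath 𝓕 h)
  let J : Finset (Fin N) := Finset.univ.filter (fun w => (hyperG 𝓕).Reachable u w)
  have hmemJ : ∀ w, w ∈ J ↔ (hyperG 𝓕).Reachable u w := by
    intro w; simp [J]
  have huJ : u ∈ J := (hmemJ u).mpr (SimpleGraph.Reachable.refl u)
  have hvJ : v ∉ J := fun h => hnr ((hmemJ v).mp h)
  have hJne : J.Nonempty := ⟨u, huJ⟩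
  have hJpr : J ≠ Finset.univ := fun h => hvJ (h ▸ Finset.mem_univ v)
  have hsplit : ∀ F ∈ 𝓕, F ⊆ J ∨ F ⊆ Jᶜ := by
    intro F hF
    by_cases hint : ∃ a ∈ F, a ∈ J
    · left
      obtain ⟨a, haF, haJ⟩ := hint
      intro b hbF
      rw [hmemJ] at haJ ⊢
      by_cases hab : a = b
      · exact hab ▸ haJ
      · exact haJ.trans (SimpleGraph.Adj.reachable (G := hyperG 𝓕)
          (show a ≠ b ∧ ∃ e ∈ 𝓕, a ∈ e ∧ b ∈ e from ⟨hab, F, hF, haF, hbF⟩))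
    · right
      push_neg at hint
      intro b hbF
      exact Finset.mem_compl.mpr (fun hbJ => hint b hbF hbJ)
  obtain ⟨φ, hunit, hmJ, hmJc, hnc⟩ := exists_bad_phi ψ hψ hGME J hJne hJpr
  obtain ⟨c, hc1, hceq⟩ := hUDP φ hunit (fun F hF => by
    rcases hsplit F hF with h | h
    · exact marginal_mono h hmJ
    · exact marginal_mono h hmJc)
  exact hnc c hceq
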